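/- If n ≥ 3 is odd and n + 2 is prime, then the labeling of GP(n,1) assigning i to v_i for 1 ≤ i ≤ n, n+2+i to u_i for 1 ≤ i ≤ n−1, and n+2 to u_n, is injective with values in {1,...,2n+1} and gives coprime labels to every pair of adjacent vertices. -/
import Mathlib

/-- The prism graph `GP(n,1)`: two `n`-cycles `v` (inl) and `u` (inr) joined by a
perfect matching. -/
def prismGraph (n : ℕ) : SimpleGraph (ZMod n ⊕ ZMod n) :=
  SimpleGraph.fromRel (fun x y =>
    (∃ i : ZMod n, x = Sum.inl i ∧ y = Sum.inl (i + 1)) ∨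
    (∃ i : ZMod n, x = Sum.inr i ∧ y = Sum.inr (i + 1)) ∨
    (∃ i : ZMod n, x = Sum.inl i ∧ y = Sum.inr i))

/-- The labeling: `v_i ↦ i`, `u_i ↦ n+2+i` for `1 ≤ i ≤ n-1`, `u_n ↦ n+2`
(vertex of value `j` represents index `j+1`). -/
def prismLabel6 (n : ℕ) : ZMod n ⊕ ZMod n → ℕ
  | Sum.inl i => i.val + 1
  | Sum.inr i => if i.val = n - 1 then n + 2 else n + 2 + (i.val + 1)

private lemma coprime_consec (m : ℕ) : Nat.Coprime m (m + 1) :=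
  Nat.coprime_self_add_right.mpr (Nat.coprime_one_right m)

private lemma coprime_of_lt_prime {p a : ℕ} (hp : Nat.Prime p) (h1 : 0 < a) (h2 : a < p) :
    Nat.Coprime a p :=
  ((hp.coprime_iff_not_dvd).mpr (Nat.not_dvd_of_pos_of_lt h1 h2)).symm

theorem prism_coprime_labeling_of_nPlusTwo_prime (n : ℕ) (hn : 3 ≤ n)
    (hodd : Odd n) (hp : Nat.Prime (n + 2)) :
    Function.Injective (prismLabel6 n) ∧
    (∀ x, prismLabel6 n x ∈ Finset.Icc 1 (2 * n + 1)) ∧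
    (∀ x y, (prismGraph n).Adj x y →
      Nat.Coprime (prismLabel6 n x) (prismLabel6 n y)) := by
  haveI : NeZero n := ⟨by omega⟩
  haveI : Fact (1 < n) := ⟨by omega⟩
  have hval : ∀ i : ZMod n, i.val < n := fun i => ZMod.val_lt i
  have hsucc : ∀ i : ZMod n, (i + 1).val = (i.val + 1) % n := by
    intro i
    rw [ZMod.val_add, ZMod.val_one]
  refine ⟨?_, ?_, ?_⟩
  · -- injectivity
    intro x y h
    match x, y with
    | Sum.inl i, Sum.inl j =>
      simp only [prismLabel6] at h
      have : i.val = j.val := by omega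
      exact congrArg Sum.inl (ZMod.val_injective n this)
    | Sum.inl i, Sum.inr j =>
      exfalso
      have hi := hval i; have hj := hval j
      simp only [prismLabel6] at h
      split at h <;> omega
    | Sum.inr i, Sum.inl j =>
      exfalso
      have hi := hval i; have hj := hval j
      simp only [prismLabel6] at h
      split at h <;> omega
    | Sum.inr i, Sum.inr j =>
      have hi := hval i; have hj := hval j
      simp only [prismLabel6] at h
      split at h <;> split at h
      · refine congrArg Sum.inr (ZMod.val_injective n ?_); omega
      · omega
      · omega
      · refine congrArg Sum.inr (ZMod.val_injective n ?_); omega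
  · -- range
    intro x
    rw [Finset.mem_Icc]
    match x with
    | Sum.inl i => have := hval i; simp only [prismLabel6]; omega
    | Sum.inr i =>
      have := hval i; simp only [prismLabel6]
      split <;> omega
  · -- coprimality
    have key : ∀ x y : ZMod n ⊕ ZMod n,
        ((∃ i : ZMod n, x = Sum.inl i ∧ y = Sum.inl (i + 1)) ∨
         (∃ i : ZMod n, x = Sum.inr i ∧ y = Sum.inr (i + 1)) ∨
         (∃ i : ZMod n, x = Sum.inl i ∧ y = Sum.inr i)) →
        Nat.Coprime (prismLabel6 n x) (prismLabel6 n y) := by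
      rintro x y (⟨i, rfl, rfl⟩ | ⟨i, rfl, rfl⟩ | ⟨i, rfl, rfl⟩)
      · -- inl i -- inl (i+1)
        have hi := hval i
        simp only [prismLabel6, hsucc i]
        rcases Nat.lt_or_ge (i.val + 1) n with h | h
        · rw [Nat.mod_eq_of_lt h]; exact coprime_consec _
        · have : i.val + 1 = n := by omega
          rw [this, Nat.mod_self]
          exact Nat.coprime_one_right _
      · -- inr i -- inr (i+1)
        have hi := hval i
        simp only [prismLabel6, hsucc i]
        rcases eq_or_ne i.val (n - 1) with h | h
        · -- u_n -- u_1 : labels n+2, n+3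
          have h2 : (i.val + 1) % n = 0 := by
            rw [show i.val + 1 = n by omega, Nat.mod_self]
          rw [if_pos h, h2, if_neg (by omega)]
          exact coprime_consec _
        · rw [if_neg h]
          have hlt : i.val + 1 < n := by omega
          rw [Nat.mod_eq_of_lt hlt]
          rcases eq_or_ne (i.val + 1) (n - 1) with h2 | h2
          · -- labels 2n+1 and n+2
            rw [if_pos h2]
            have hd : ¬ (n + 2) ∣ (n + 2 + (i.val + 1)) := by
              rw [Nat.dvd_add_right (dvd_refl _)]
              exact Nat.not_dvd_of_pos_of_lt (by omega) (by omega)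
            exact ((hp.coprime_iff_not_dvd).mpr hd).symm
          · rw [if_neg h2]
            have : n + 2 + (i.val + 1 + 1) = (n + 2 + (i.val + 1)) + 1 := by omega
            rw [this]
            exact coprime_consec _
      · -- inl i -- inr i
        have hi := hval i
        simp only [prismLabel6]
        rcases eq_or_ne i.val (n - 1) with h | h
        · -- labels n and n+2, n odd
          rw [if_pos h, show i.val + 1 = n by omega]
          have h2 : Nat.Coprime n 2 := by
            rw [Nat.coprime_comm, Nat.prime_two.coprime_iff_not_dvd]
            have := Nat.odd_iff.mp hodd
            omega
          have := Nat.coprime_add_self_right.mpr h2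
          rwa [show 2 + n = n + 2 by ring] at this
        · -- labels a+1 and n+3+a, difference n+2 prime
          rw [if_neg h, show n + 2 + (i.val + 1) = (n + 2) + (i.val + 1) by ring]
          exact Nat.coprime_add_self_right.mpr (coprime_of_lt_prime hp (by omega) (by omega))
    intro x y hadj
    rw [prismGraph, SimpleGraph.fromRel_adj] at hadj
    rcases hadj.2 with h | h
    · exact key x y h
    · exact (key y x h).symm
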